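/- Let V, V₁, V₂ be complex Hilbert spaces, (K, J) a Krein space, and T : V → K, T₁ : V₁ → K, T₂ : V₂ → K bounded injective linear operators with T T^[*] = T₁ T₁^[*] + T₂ T₂^[*]. Let R₁ : V₁ → V, R₂ : V₂ → V be bounded operators with T₁ = T R₁ and T₂ = T R₂. Suppose C is a bounded operator on K commuting with both T₁ T₁^[*] and T₂ T₂^[*], and suppose D (bounded on V) and D_j (bounded on V_j, j = 1,2) satisfy T D = C T and T_j D_j = C T_j. Then for j = 1,2: R_j D_j R_j† = R_j R_j† D = D R_j R_j† and D R_j = R_j D_j, where R_j† denotes the Hilbert-space adjoint. -/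

import Mathlib

open ContinuousLinearMap

/-- Cancel an injective operator on the left of a composition equality. -/
private lemma cancelT' {W V K : Type*}
    [NormedAddCommGroup K] [InnerProductSpace ℂ K]
    [NormedAddCommGroup V] [InnerProductSpace ℂ V]
    [NormedAddCommGroup W] [InnerProductSpace ℂ W]
    (T : V →L[ℂ] K) (hT : Function.Injective T) {A B : W →L[ℂ] V}
    (h : T ∘L A = T ∘L B) : A = B := by
  ext x
  exact hT (congrArg (fun f => f x) h)

/-- If `X ∘ T^[*] = 0` with `T` injective and `J` a fundamental symmetry, then `X = 0`. -/
private lemma zero_of_comp' {V K : Type*}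
    [NormedAddCommGroup K] [InnerProductSpace ℂ K] [CompleteSpace K]
    [NormedAddCommGroup V] [InnerProductSpace ℂ V] [CompleteSpace V]
    (J : K →L[ℂ] K) (hJsa : IsSelfAdjoint J) (hJ2 : J ∘L J = 1)
    (T : V →L[ℂ] K) (hT : Function.Injective T)
    (X : V →L[ℂ] V) (h : X ∘L (adjoint T ∘L J) = 0) : X = 0 := by
  have h1 : adjoint (X ∘L (adjoint T ∘L J)) = 0 := by rw [h]; simp
  rw [adjoint_comp, adjoint_comp, adjoint_adjoint, hJsa.adjoint_eq] at h1
  -- h1 : (J ∘L T) ∘L adjoint X = 0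
  have h2 : T ∘L adjoint X = 0 := by
    have := congrArg (fun Y => J ∘L Y) h1
    simpa [← comp_assoc, hJ2, one_def] using this
  have h3 : adjoint X = 0 := cancelT' T hT (by simpa using h2)
  calc X = adjoint (adjoint X) := (adjoint_adjoint X).symm
  _ = 0 := by rw [h3]; simp

/-- The main one-index computation. -/
private lemma key' {K V Vj : Type*}
    [NormedAddCommGroup K] [InnerProductSpace ℂ K] [CompleteSpace K]
    [NormedAddCommGroup V] [InnerProductSpace ℂ V] [CompleteSpace V]
    [NormedAddCommGroup Vj] [InnerProductSpace ℂ Vj] [CompleteSpace Vj]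
    (J : K →L[ℂ] K) (hJsa : IsSelfAdjoint J) (hJ2 : J ∘L J = 1)
    (T : V →L[ℂ] K) (Tj : Vj →L[ℂ] K) (hTinj : Function.Injective T)
    (Rj : Vj →L[ℂ] V) (hRj : Tj = T ∘L Rj)
    (C : K →L[ℂ] K)
    (hCj : C ∘L (Tj ∘L (adjoint Tj ∘L J)) = (Tj ∘L (adjoint Tj ∘L J)) ∘L C)
    (D : V →L[ℂ] V) (Dj : Vj →L[ℂ] Vj)
    (hD : T ∘L D = C ∘L T) (hDj : Tj ∘L Dj = C ∘L Tj)
    (hstar : D ∘L (adjoint T ∘L J) = (adjoint T ∘L J) ∘L C) :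
    Rj ∘L Dj ∘L adjoint Rj = (Rj ∘L adjoint Rj) ∘L D ∧
      (Rj ∘L adjoint Rj) ∘L D = D ∘L (Rj ∘L adjoint Rj) ∧
      D ∘L Rj = Rj ∘L Dj := by
  -- Step A : D ∘ Rj = Rj ∘ Dj
  have hA : D ∘L Rj = Rj ∘L Dj := by
    refine cancelT' T hTinj ?_
    calc T ∘L (D ∘L Rj) = (T ∘L D) ∘L Rj := rfl
    _ = (C ∘L T) ∘L Rj := by rw [hD]
    _ = C ∘L Tj := by rw [hRj]; rfl
    _ = Tj ∘L Dj := hDj.symm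
    _ = T ∘L (Rj ∘L Dj) := by rw [hRj]; rfl
  set Pj : V →L[ℂ] V := Rj ∘L adjoint Rj with hPj
  have hTT : Tj ∘L (adjoint Tj ∘L J) = T ∘L (Pj ∘L (adjoint T ∘L J)) := by
    rw [hRj, adjoint_comp]
    rfl
  -- Step B : D commutes with Pj
  have hB : D ∘L Pj = Pj ∘L D := by
    have h1 : T ∘L ((D ∘L Pj) ∘L (adjoint T ∘L J))
        = T ∘L ((Pj ∘L D) ∘L (adjoint T ∘L J)) := by
      calc T ∘L ((D ∘L Pj) ∘L (adjoint T ∘L J))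
          = (T ∘L D) ∘L (Pj ∘L (adjoint T ∘L J)) := rfl
        _ = (C ∘L T) ∘L (Pj ∘L (adjoint T ∘L J)) := by rw [hD]
        _ = C ∘L (Tj ∘L (adjoint Tj ∘L J)) := by rw [hTT]; rfl
        _ = (Tj ∘L (adjoint Tj ∘L J)) ∘L C := hCj
        _ = (T ∘L (Pj ∘L (adjoint T ∘L J))) ∘L C := by rw [hTT]
        _ = T ∘L (Pj ∘L ((adjoint T ∘L J) ∘L C)) := rfl
        _ = T ∘L (Pj ∘L (D ∘L (adjoint T ∘L J))) := by rw [hstar]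
        _ = T ∘L ((Pj ∘L D) ∘L (adjoint T ∘L J)) := rfl
    have h2 : (D ∘L Pj) ∘L (adjoint T ∘L J) = (Pj ∘L D) ∘L (adjoint T ∘L J) :=
      cancelT' T hTinj h1
    have h3 : (D ∘L Pj - Pj ∘L D) ∘L (adjoint T ∘L J) = 0 := by
      rw [sub_comp, h2, sub_self]
    have h4 := zero_of_comp' J hJsa hJ2 T hTinj _ h3
    have := sub_eq_zero.mp h4
    exact this
  have hC : Rj ∘L Dj ∘L adjoint Rj = Pj ∘L D := by
    calc Rj ∘L Dj ∘L adjoint Rj = (Rj ∘L Dj) ∘L adjoint Rj := rfl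
    _ = (D ∘L Rj) ∘L adjoint Rj := by rw [hA]
    _ = D ∘L Pj := rfl
    _ = Pj ∘L D := hB
  exact ⟨hC, hB.symm, hA⟩

/-- In the setting of multiple embeddings into a Krein space `(K, J)`:
if `C` commutes with `T₁ T₁^[*]` and `T₂ T₂^[*]`, and `D`, `D_j` satisfy `T D = C T`,
`T_j D_j = C T_j`, then `R_j D_j R_j† = R_j R_j† D = D R_j R_j†` and `D R_j = R_j D_j`. -/
theorem stmt_2
    {K V V₁ V₂ : Type*}
    [NormedAddCommGroup K] [InnerProductSpace ℂ K] [CompleteSpace K]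
    [NormedAddCommGroup V] [InnerProductSpace ℂ V] [CompleteSpace V]
    [NormedAddCommGroup V₁] [InnerProductSpace ℂ V₁] [CompleteSpace V₁]
    [NormedAddCommGroup V₂] [InnerProductSpace ℂ V₂] [CompleteSpace V₂]
    (J : K →L[ℂ] K) (hJsa : IsSelfAdjoint J) (hJ2 : J ∘L J = 1)
    (T : V →L[ℂ] K) (T₁ : V₁ →L[ℂ] K) (T₂ : V₂ →L[ℂ] K)
    (hTinj : Function.Injective T) (hT₁inj : Function.Injective T₁)
    (hT₂inj : Function.Injective T₂)
    (hsum : T ∘L (adjoint T ∘L J) = T₁ ∘L (adjoint T₁ ∘L J) + T₂ ∘L (adjoint T₂ ∘L J))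
    (R₁ : V₁ →L[ℂ] V) (R₂ : V₂ →L[ℂ] V)
    (hR₁ : T₁ = T ∘L R₁) (hR₂ : T₂ = T ∘L R₂)
    (C : K →L[ℂ] K)
    (hC₁ : C ∘L (T₁ ∘L (adjoint T₁ ∘L J)) = (T₁ ∘L (adjoint T₁ ∘L J)) ∘L C)
    (hC₂ : C ∘L (T₂ ∘L (adjoint T₂ ∘L J)) = (T₂ ∘L (adjoint T₂ ∘L J)) ∘L C)
    (D : V →L[ℂ] V) (D₁ : V₁ →L[ℂ] V₁) (D₂ : V₂ →L[ℂ] V₂)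
    (hD : T ∘L D = C ∘L T) (hD₁ : T₁ ∘L D₁ = C ∘L T₁) (hD₂ : T₂ ∘L D₂ = C ∘L T₂) :
    (R₁ ∘L D₁ ∘L adjoint R₁ = (R₁ ∘L adjoint R₁) ∘L D ∧
      (R₁ ∘L adjoint R₁) ∘L D = D ∘L (R₁ ∘L adjoint R₁) ∧
      D ∘L R₁ = R₁ ∘L D₁) ∧
    (R₂ ∘L D₂ ∘L adjoint R₂ = (R₂ ∘L adjoint R₂) ∘L D ∧
      (R₂ ∘L adjoint R₂) ∘L D = D ∘L (R₂ ∘L adjoint R₂) ∧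
      D ∘L R₂ = R₂ ∘L D₂) := by
  -- C commutes with T T^[*]
  have hCTT : C ∘L (T ∘L (adjoint T ∘L J)) = (T ∘L (adjoint T ∘L J)) ∘L C := by
    rw [hsum, comp_add, add_comp, hC₁, hC₂]
  -- hence D ∘ T^[*] = T^[*] ∘ C
  have hstar : D ∘L (adjoint T ∘L J) = (adjoint T ∘L J) ∘L C := by
    refine cancelT' T hTinj ?_
    calc T ∘L (D ∘L (adjoint T ∘L J)) = (T ∘L D) ∘L (adjoint T ∘L J) := rfl
    _ = (C ∘L T) ∘L (adjoint T ∘L J) := by rw [hD]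
    _ = C ∘L (T ∘L (adjoint T ∘L J)) := rfl
    _ = (T ∘L (adjoint T ∘L J)) ∘L C := hCTT
    _ = T ∘L ((adjoint T ∘L J) ∘L C) := rfl
  exact ⟨key' J hJsa hJ2 T T₁ hTinj R₁ hR₁ C hC₁ D D₁ hD hD₁ hstar,
    key' J hJsa hJ2 T T₂ hTinj R₂ hR₂ C hC₂ D D₂ hD hD₂ hstar⟩
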